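/- Let d ≥ 1 and C ≥ 1. Let w : Fin C → EuclideanSpace ℝ (Fin d) and b : Fin C → ℝ define logits g(z) c = ⟪w c, z⟫ + b c, and let p(z) = softmax(g(z)). Fix z₀ ∈ EuclideanSpace ℝ (Fin d), a real λ ≥ 0, and a positive semidefinite matrix Σ : Matrix (Fin d) (Fin d) ℝ, and let ν = N(z₀, λ • Σ). Then the function (x, y) ↦ −log (∑_c p(x) c * p(y) c) is nonnegative, and its double Lebesgue integral satisfies ∫⁻ ∫⁻ ENNReal.ofReal (−log (∑_c p(x) c * p(y) c)) dν(x) dν(y) ≤ ENNReal.ofReal (−2 * ∑_c log (exp (g(z₀) c) / ∑_{c'} exp (g(z₀) c' + (λ/2) * (w c' − w c)ᵀ Σ (w c' − w c)))). -/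

import Mathlib

open MeasureTheory ProbabilityTheory Real
open scoped RealInnerProductSpace BigOperators ENNReal

/-- The multivariate Gaussian measure `N(μ, S)` on `EuclideanSpace ℝ (Fin d)` with mean `μ` and
positive semidefinite covariance matrix `S`, realized as the pushforward of the standard
Gaussian under the affine map `x ↦ μ + √S x`. -/
noncomputable def multiGaussian {d : ℕ} (μ : EuclideanSpace ℝ (Fin d))
    (S : Matrix (Fin d) (Fin d) ℝ) (hS : S.PosSemidef) :
    Measure (EuclideanSpace ℝ (Fin d)) :=
  (MeasureTheory.Measure.pi fun _ : Fin d => gaussianReal 0 1).map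
    (fun x => μ + (EuclideanSpace.equiv (Fin d) ℝ).symm (((hS.1.eigenvectorUnitary : Matrix (Fin d) (Fin d) ℝ) *
      Matrix.diagonal ((RCLike.ofReal : ℝ → ℝ) ∘ (√·) ∘ hS.1.eigenvalues) *
      (star hS.1.eigenvectorUnitary : Matrix (Fin d) (Fin d) ℝ)).mulVec x))

/-- The quadratic form `aᵀ S a = ∑ p q, a p * S p q * a q`. -/
def quadForm {d : ℕ} (S : Matrix (Fin d) (Fin d) ℝ) (a : EuclideanSpace ℝ (Fin d)) : ℝ :=
  ∑ p, ∑ q, a p * S p q * a q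

/-- Softmax of a vector of logits. -/
noncomputable def softmax {C : ℕ} (v : Fin C → ℝ) (c : Fin C) : ℝ :=
  Real.exp (v c) / ∑ c', Real.exp (v c')

/-- A nonnegative scalar multiple of a positive semidefinite matrix is positive semidefinite. -/
theorem posSemidef_smul {d : ℕ} {S : Matrix (Fin d) (Fin d) ℝ} (hS : S.PosSemidef)
    {c : ℝ} (hc : 0 ≤ c) : (c • S).PosSemidef := by
  refine Matrix.PosSemidef.of_dotProduct_mulVec_nonneg ?_ fun x => ?_
  · unfold Matrix.IsHermitian
    rw [Matrix.conjTranspose_smul, hS.1]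
    simp
  · rw [Matrix.smul_mulVec]
    simp only [dotProduct_smul, smul_eq_mul]
    exact mul_nonneg hc (hS.dotProduct_mulVec_nonneg x)



section Helpers
open Matrix

noncomputable def sqM {d : ℕ} {S : Matrix (Fin d) (Fin d) ℝ} (hS : S.PosSemidef) :
    Matrix (Fin d) (Fin d) ℝ :=
  (hS.1.eigenvectorUnitary : Matrix (Fin d) (Fin d) ℝ) *
      Matrix.diagonal ((RCLike.ofReal : ℝ → ℝ) ∘ (√·) ∘ hS.1.eigenvalues) *
      (star hS.1.eigenvectorUnitary : Matrix (Fin d) (Fin d) ℝ)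

lemma sqM_transpose {d : ℕ} {S : Matrix (Fin d) (Fin d) ℝ} (hS : S.PosSemidef) :
    (sqM hS).transpose = sqM hS := by
  unfold sqM
  simp [Matrix.transpose_mul, Matrix.mul_assoc, Matrix.star_eq_conjTranspose,
    Matrix.conjTranspose_eq_transpose_of_trivial]

lemma sqM_mul_self {d : ℕ} {S : Matrix (Fin d) (Fin d) ℝ} (hS : S.PosSemidef) :
    sqM hS * sqM hS = S := by
  have hU : (star hS.1.eigenvectorUnitary : Matrix (Fin d) (Fin d) ℝ) *
      (hS.1.eigenvectorUnitary : Matrix (Fin d) (Fin d) ℝ) = 1 := by simp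
  unfold sqM
  conv_rhs => rw [hS.1.spectral_theorem]
  rw [Unitary.conjStarAlgAut_apply]
  calc _ = (hS.1.eigenvectorUnitary : Matrix (Fin d) (Fin d) ℝ) *
      Matrix.diagonal ((RCLike.ofReal : ℝ → ℝ) ∘ (√·) ∘ hS.1.eigenvalues) *
      ((star hS.1.eigenvectorUnitary : Matrix (Fin d) (Fin d) ℝ) *
      (hS.1.eigenvectorUnitary : Matrix (Fin d) (Fin d) ℝ)) *
      Matrix.diagonal ((RCLike.ofReal : ℝ → ℝ) ∘ (√·) ∘ hS.1.eigenvalues) *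
      (star hS.1.eigenvectorUnitary : Matrix (Fin d) (Fin d) ℝ) := by
        simp only [Matrix.mul_assoc]
    _ = _ := by
        rw [hU, Matrix.mul_one, Matrix.mul_assoc _ (Matrix.diagonal _) (Matrix.diagonal _),
          Matrix.diagonal_mul_diagonal]
        congr 3
        funext i
        simp [Real.mul_self_sqrt (hS.eigenvalues_nonneg i)]

lemma gauss_pdf_mul_exp (t : ℝ) :
    (fun x => gaussianPDFReal 0 1 x * rexp (t * x))
      = fun x => ((Real.sqrt (2 * π))⁻¹ * rexp (t ^ 2 / 2)) * rexp (-(1/2 : ℝ) * (x - t) ^ 2) := by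
  funext x
  rw [gaussianPDFReal]
  simp only [NNReal.coe_one, mul_one, sub_zero]
  rw [mul_assoc, ← Real.exp_add, mul_assoc, ← Real.exp_add]
  congr 1
  ring

lemma integrable_gauss_shift (t : ℝ) :
    Integrable (fun x : ℝ => rexp (-(1/2 : ℝ) * (x - t) ^ 2)) := by
  have h := integrable_exp_neg_mul_sq (b := (1/2 : ℝ)) (by norm_num)
  exact h.comp_sub_right t

lemma integral_gauss_shift (t : ℝ) :
    ∫ x : ℝ, rexp (-(1/2 : ℝ) * (x - t) ^ 2) = Real.sqrt (2 * π) := by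
  rw [integral_sub_right_eq_self (μ := volume) (fun x => rexp (-(1/2 : ℝ) * x ^ 2)) t]
  rw [integral_gaussian (1/2 : ℝ)]
  rw [show π / (1/2 : ℝ) = 2 * π by ring]

lemma integrable_exp_mul_stdGauss (t : ℝ) :
    Integrable (fun x => rexp (t * x)) (gaussianReal 0 1) := by
  rw [gaussianReal_of_var_ne_zero 0 one_ne_zero,
    integrable_withDensity_iff_integrable_smul' (measurable_gaussianPDF 0 1)
      (Filter.Eventually.of_forall fun x => ENNReal.ofReal_lt_top)]
  have : (fun x => (gaussianPDF 0 1 x).toReal • rexp (t * x))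
      = fun x => gaussianPDFReal 0 1 x * rexp (t * x) := by
    funext x
    rw [gaussianPDF, ENNReal.toReal_ofReal (gaussianPDFReal_nonneg 0 1 x), smul_eq_mul]
  rw [this, gauss_pdf_mul_exp]
  exact (integrable_gauss_shift t).const_mul _

lemma integral_exp_mul_stdGauss (t : ℝ) :
    ∫ x, rexp (t * x) ∂(gaussianReal 0 1) = rexp (t ^ 2 / 2) := by
  rw [gaussianReal_of_var_ne_zero 0 one_ne_zero]
  have hd : (gaussianPDF 0 1) = fun x => ((gaussianPDFReal 0 1 x).toNNReal : ℝ≥0∞) := rfl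
  rw [hd, integral_withDensity_eq_integral_smul
    ((measurable_gaussianPDFReal 0 1).real_toNNReal) (fun x => rexp (t * x))]
  have : (fun x => (gaussianPDFReal 0 1 x).toNNReal • rexp (t * x))
      = fun x => gaussianPDFReal 0 1 x * rexp (t * x) := by
    funext x
    rw [NNReal.smul_def, Real.coe_toNNReal _ (gaussianPDFReal_nonneg 0 1 x), smul_eq_mul]
  rw [this, gauss_pdf_mul_exp, integral_const_mul, integral_gauss_shift]
  have h0 : Real.sqrt (2 * π) ≠ 0 := ne_of_gt (Real.sqrt_pos.2 (by positivity))
  field_simp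

lemma pi_gauss_integrable_prod {n : ℕ} (f : Fin n → ℝ → ℝ)
    (hf : ∀ i, Integrable (f i) (gaussianReal 0 1)) :
    Integrable (fun x : Fin n → ℝ => ∏ i, f i (x i))
      (Measure.pi fun _ => gaussianReal 0 1) := by
  letI : MeasureSpace ℝ := ⟨gaussianReal 0 1⟩
  haveI : SigmaFinite (volume : Measure ℝ) := inferInstanceAs (SigmaFinite (gaussianReal 0 1))
  exact Integrable.fin_nat_prod (E := fun _ : Fin n => ℝ) hf

lemma pi_gauss_integral_prod {n : ℕ} (f : Fin n → ℝ → ℝ) :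
    ∫ x : Fin n → ℝ, (∏ i, f i (x i)) ∂(Measure.pi fun _ => gaussianReal 0 1)
      = ∏ i, ∫ x, f i x ∂(gaussianReal 0 1) := by
  letI : MeasureSpace ℝ := ⟨gaussianReal 0 1⟩
  haveI : SigmaFinite (volume : Measure ℝ) := inferInstanceAs (SigmaFinite (gaussianReal 0 1))
  exact integral_fin_nat_prod_eq_prod (E := fun _ : Fin n => ℝ) f

lemma gaussMap_continuous {d : ℕ} (μ : EuclideanSpace ℝ (Fin d))
    (M : Matrix (Fin d) (Fin d) ℝ) :
    Continuous (fun x : Fin d → ℝ => μ + (EuclideanSpace.equiv (Fin d) ℝ).symm (M.mulVec x)) := by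
  exact continuous_const.add ((EuclideanSpace.equiv (Fin d) ℝ).symm.continuous.comp
    (continuous_const.matrix_mulVec continuous_id))

lemma isProbabilityMeasure_multiGaussian {d : ℕ} (μ : EuclideanSpace ℝ (Fin d))
    (S : Matrix (Fin d) (Fin d) ℝ) (hS : S.PosSemidef) :
    IsProbabilityMeasure (multiGaussian μ S hS) :=
  Measure.isProbabilityMeasure_map (gaussMap_continuous μ (sqM hS)).aemeasurable

lemma exp_inner_affine {d : ℕ} (μ : EuclideanSpace ℝ (Fin d)) (M : Matrix (Fin d) (Fin d) ℝ)
    (a : EuclideanSpace ℝ (Fin d)) (x : Fin d → ℝ) :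
    rexp ⟪a, μ + (EuclideanSpace.equiv (Fin d) ℝ).symm (M.mulVec x)⟫
      = rexp ⟪a, μ⟫ * ∏ j, rexp (Matrix.vecMul (a : Fin d → ℝ) M j * x j) := by
  rw [inner_add_right, Real.exp_add]
  congr 1
  have h1 : ⟪a, (EuclideanSpace.equiv (Fin d) ℝ).symm (M.mulVec x)⟫
      = dotProduct (fun i => a i) (M.mulVec x) := by
    simp [PiLp.inner_apply, RCLike.inner_apply, dotProduct]
    exact Finset.sum_congr rfl fun _ _ => mul_comm _ _
  rw [h1, Matrix.dotProduct_mulVec, ← Real.exp_sum]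
  congr 1

lemma sum_sq_vecMul {d : ℕ} (S : Matrix (Fin d) (Fin d) ℝ) (hS : S.PosSemidef)
    (a : EuclideanSpace ℝ (Fin d)) :
    ∑ j, (Matrix.vecMul (a : Fin d → ℝ) (sqM hS)) j ^ 2 = quadForm S a := by
  set M := sqM hS with hM
  have hsym : M.transpose = M := by
    ext i j
    exact congrFun (congrFun (sqM_transpose hS) i) j
  have h1 : ∑ j, (Matrix.vecMul (a : Fin d → ℝ) M) j ^ 2
      = dotProduct (fun i => a i) (M *ᵥ (Matrix.vecMul (a : Fin d → ℝ) M)) := by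
    rw [Matrix.dotProduct_mulVec]
    simp [dotProduct, sq]
  rw [h1]
  have h2 : M *ᵥ (Matrix.vecMul (a : Fin d → ℝ) M) = S *ᵥ (fun i => a i) := by
    rw [← Matrix.mulVec_transpose M, Matrix.mulVec_mulVec, hsym, sqM_mul_self hS]
  rw [h2]
  simp [quadForm, dotProduct, Matrix.mulVec, Finset.mul_sum, mul_assoc]

lemma multiGaussian_exp_inner {d : ℕ} (μ : EuclideanSpace ℝ (Fin d))
    (S : Matrix (Fin d) (Fin d) ℝ) (hS : S.PosSemidef) (a : EuclideanSpace ℝ (Fin d)) :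
    Integrable (fun x => rexp ⟪a, x⟫) (multiGaussian μ S hS) ∧
    ∫ x, rexp ⟪a, x⟫ ∂(multiGaussian μ S hS) = rexp (⟪a, μ⟫ + quadForm S a / 2) := by
  set M := sqM hS with hMdef
  set T : (Fin d → ℝ) → EuclideanSpace ℝ (Fin d) :=
    fun x => μ + (EuclideanSpace.equiv (Fin d) ℝ).symm (M.mulVec x) with hT
  have hTc : Continuous T := gaussMap_continuous μ M
  have hfm : AEStronglyMeasurable (fun x => rexp ⟪a, x⟫) (multiGaussian μ S hS) :=
    (Real.continuous_exp.comp (continuous_const.inner continuous_id)).aestronglyMeasurable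
  have hmap : multiGaussian μ S hS = (Measure.pi fun _ : Fin d => gaussianReal 0 1).map T := rfl
  set u : Fin d → ℝ := Matrix.vecMul (a : Fin d → ℝ) M with hu
  have hcomp : ((fun x => rexp ⟪a, x⟫) ∘ T)
      = fun x : Fin d → ℝ => rexp ⟪a, μ⟫ * ∏ j, rexp (u j * x j) :=
    funext fun x => exp_inner_affine μ M a x
  constructor
  · rw [hmap, integrable_map_measure (hmap ▸ hfm) hTc.aemeasurable, hcomp]
    exact (pi_gauss_integrable_prod _ (fun i => integrable_exp_mul_stdGauss (u i))).const_mul _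
  · rw [hmap, integral_map hTc.aemeasurable (hmap ▸ hfm)]
    rw [show (fun x : Fin d → ℝ => rexp ⟪a, T x⟫)
        = fun x : Fin d → ℝ => rexp ⟪a, μ⟫ * ∏ j, rexp (u j * x j) from hcomp]
    rw [integral_const_mul, pi_gauss_integral_prod (fun j y => rexp (u j * y))]
    have : ∀ i, ∫ x, rexp (u i * x) ∂(gaussianReal 0 1) = rexp (u i ^ 2 / 2) :=
      fun i => integral_exp_mul_stdGauss (u i)
    rw [Finset.prod_congr rfl (fun i _ => this i), ← Real.exp_sum, ← Real.exp_add]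
    congr 1
    rw [← Finset.sum_div, sum_sq_vecMul S hS a]

lemma quadForm_smul {d : ℕ} (lam : ℝ) (S : Matrix (Fin d) (Fin d) ℝ)
    (a : EuclideanSpace ℝ (Fin d)) : quadForm (lam • S) a = lam * quadForm S a := by
  unfold quadForm
  rw [Finset.mul_sum]
  refine Finset.sum_congr rfl fun p _ => ?_
  rw [Finset.mul_sum]
  refine Finset.sum_congr rfl fun q _ => ?_
  simp [Matrix.smul_apply, smul_eq_mul]
  ring


end Helpers

/-- Proposition 1 (SF(DA)²): the implicit feature augmentation (IFA) loss is an upper bound of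
the expected explicit feature augmentation loss over two i.i.d. Gaussian-augmented features. -/
theorem ifa_upper_bound (d C : ℕ) (hd : 1 ≤ d) (hC : 1 ≤ C)
    (w : Fin C → EuclideanSpace ℝ (Fin d)) (b : Fin C → ℝ)
    (g : EuclideanSpace ℝ (Fin d) → Fin C → ℝ)
    (hg : ∀ z c, g z c = ⟪w c, z⟫ + b c)
    (p : EuclideanSpace ℝ (Fin d) → Fin C → ℝ)
    (hp : ∀ z, p z = softmax (g z))
    (z₀ : EuclideanSpace ℝ (Fin d)) (lam : ℝ) (hlam : 0 ≤ lam)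
    (Sig : Matrix (Fin d) (Fin d) ℝ) (hSig : Sig.PosSemidef) :
    (∀ x y : EuclideanSpace ℝ (Fin d), 0 ≤ -Real.log (∑ c, p x c * p y c)) ∧
    (∫⁻ y, ∫⁻ x, ENNReal.ofReal (-Real.log (∑ c, p x c * p y c))
        ∂(multiGaussian z₀ (lam • Sig) (posSemidef_smul hSig hlam))
        ∂(multiGaussian z₀ (lam • Sig) (posSemidef_smul hSig hlam)))
      ≤ ENNReal.ofReal (-2 * ∑ c, Real.log (Real.exp (g z₀ c) /
          ∑ c', Real.exp (g z₀ c' + lam / 2 * quadForm Sig (w c' - w c)))) := by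
  set ν := multiGaussian z₀ (lam • Sig) (posSemidef_smul hSig hlam) with hν
  haveI : IsProbabilityMeasure ν := isProbabilityMeasure_multiGaussian _ _ _
  have hCne : (Finset.univ : Finset (Fin C)).Nonempty := ⟨⟨0, hC⟩, Finset.mem_univ _⟩
  have hZpos : ∀ z : EuclideanSpace ℝ (Fin d), 0 < ∑ c', rexp (g z c') :=
    fun z => Finset.sum_pos (fun c _ => exp_pos _) hCne
  have hppos : ∀ z c, 0 < p z c := fun z c => by
    rw [hp]; exact div_pos (exp_pos _) (hZpos z)
  have hpsum : ∀ z, ∑ c, p z c = 1 := fun z => by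
    rw [hp]; unfold softmax
    rw [← Finset.sum_div, div_self (ne_of_gt (hZpos z))]
  have hple : ∀ z c, p z c ≤ 1 := fun z c => by
    rw [← hpsum z]
    exact Finset.single_le_sum (fun c' _ => (hppos z c').le) (Finset.mem_univ c)
  have hspos : ∀ x y, 0 < ∑ c, p x c * p y c := fun x y =>
    Finset.sum_pos (fun c _ => mul_pos (hppos x c) (hppos y c)) hCne
  have part1 : ∀ x y : EuclideanSpace ℝ (Fin d), 0 ≤ -Real.log (∑ c, p x c * p y c) := by
    intro x y
    have hle1 : ∑ c, p x c * p y c ≤ 1 := by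
      calc ∑ c, p x c * p y c ≤ ∑ c, p x c * 1 :=
            Finset.sum_le_sum fun c _ => mul_le_mul_of_nonneg_left (hple y c) (hppos x c).le
        _ = 1 := by simp only [mul_one]; exact hpsum x
    have := Real.log_nonpos (hspos x y).le hle1
    linarith
  refine ⟨part1, ?_⟩
  -- the auxiliary functions
  set h : Fin C → EuclideanSpace ℝ (Fin d) → ℝ :=
    fun c x => ∑ c', rexp (g x c' - g x c) with hh
  have hh1 : ∀ c x, 1 ≤ h c x := fun c x => by
    have h0 : rexp (g x c - g x c) ≤ ∑ c', rexp (g x c' - g x c) :=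
      Finset.single_le_sum (f := fun c' => rexp (g x c' - g x c))
        (fun c' _ => (exp_pos _).le) (Finset.mem_univ c)
    simpa using h0
  have hhpos : ∀ c x, (0:ℝ) < h c x := fun c x => lt_of_lt_of_le one_pos (hh1 c x)
  set F : EuclideanSpace ℝ (Fin d) → ℝ := fun x => ∑ c, Real.log (h c x) with hF
  have hFnn : ∀ x, 0 ≤ F x := fun x =>
    Finset.sum_nonneg fun c _ => Real.log_nonneg (hh1 c x)
  have hgcont : ∀ c, Continuous fun z : EuclideanSpace ℝ (Fin d) => g z c := fun c => by
    simp only [hg]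
    exact (continuous_const.inner continuous_id).add continuous_const
  have hhcont : ∀ c, Continuous (h c) := fun c => by
    rw [hh]
    exact continuous_finset_sum _ fun c' _ =>
      Real.continuous_exp.comp ((hgcont c').sub (hgcont c))
  have hFmeas : Measurable F := by
    rw [hF]
    exact Finset.measurable_sum _ fun c _ =>
      Real.measurable_log.comp (hhcont c).measurable
  -- pointwise bound
  set c₀ : Fin C := ⟨0, hC⟩ with hc₀
  have hlogp : ∀ z, -Real.log (p z c₀) = Real.log (h c₀ z) := by
    intro z
    rw [hp]; unfold softmax
    rw [Real.log_div (exp_pos _).ne' (hZpos z).ne', Real.log_exp]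
    have he : h c₀ z = (∑ c', rexp (g z c')) / rexp (g z c₀) := by
      rw [hh, Finset.sum_div]
      exact Finset.sum_congr rfl fun c' _ => by rw [Real.exp_sub]
    rw [he, Real.log_div (hZpos z).ne' (exp_pos _).ne', Real.log_exp]
    ring
  have hbound : ∀ x y, -Real.log (∑ c, p x c * p y c) ≤ F x + F y := by
    intro x y
    have h1 : p x c₀ * p y c₀ ≤ ∑ c, p x c * p y c :=
      Finset.single_le_sum (fun c _ => (mul_pos (hppos x c) (hppos y c)).le)
        (Finset.mem_univ c₀)
    have h2 : Real.log (p x c₀ * p y c₀) ≤ Real.log (∑ c, p x c * p y c) :=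
      Real.log_le_log (mul_pos (hppos x c₀) (hppos y c₀)) h1
    rw [Real.log_mul (hppos x c₀).ne' (hppos y c₀).ne'] at h2
    have h4 : Real.log (h c₀ x) ≤ F x :=
      Finset.single_le_sum (fun c (_ : c ∈ Finset.univ) => Real.log_nonneg (hh1 c x))
        (Finset.mem_univ c₀)
    have h5 : Real.log (h c₀ y) ≤ F y :=
      Finset.single_le_sum (fun c (_ : c ∈ Finset.univ) => Real.log_nonneg (hh1 c y))
        (Finset.mem_univ c₀)
    have hx := hlogp x
    have hy := hlogp y
    linarith
  -- rewrite h c as sum of exponentials of inner products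
  have hrw : ∀ c, h c = fun x => ∑ c', rexp (b c' - b c) * rexp ⟪w c' - w c, x⟫ := by
    intro c
    funext x
    rw [hh]
    refine Finset.sum_congr rfl fun c' _ => ?_
    rw [← Real.exp_add, hg, hg, inner_sub_left]
    congr 1
    ring
  set K : Fin C → ℝ :=
    fun c => ∑ c', rexp (g z₀ c' - g z₀ c + lam / 2 * quadForm Sig (w c' - w c)) with hK
  have hint : ∀ c, Integrable (h c) ν := by
    intro c
    rw [hrw c]
    exact integrable_finset_sum _ fun c' _ =>
      ((multiGaussian_exp_inner z₀ (lam • Sig) (posSemidef_smul hSig hlam)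
        (w c' - w c)).1).const_mul _
  have hintval : ∀ c, ∫ x, h c x ∂ν = K c := by
    intro c
    rw [hrw c]
    rw [integral_finset_sum _ (fun c' _ =>
      ((multiGaussian_exp_inner z₀ (lam • Sig) (posSemidef_smul hSig hlam)
        (w c' - w c)).1).const_mul _)]
    refine Finset.sum_congr rfl fun c' _ => ?_
    rw [integral_const_mul,
      (multiGaussian_exp_inner z₀ (lam • Sig) (posSemidef_smul hSig hlam) (w c' - w c)).2,
      ← Real.exp_add, quadForm_smul, hg, hg, inner_sub_left]
    congr 1
    ring
  have hK1 : ∀ c, 1 ≤ K c := by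
    intro c
    have h0 : ∫ _ : EuclideanSpace ℝ (Fin d), (1:ℝ) ∂ν ≤ ∫ x, h c x ∂ν :=
      integral_mono (integrable_const 1) (hint c) fun x => hh1 c x
    rw [hintval c] at h0
    simpa using h0
  have hKpos : ∀ c, (0:ℝ) < K c := fun c => lt_of_lt_of_le one_pos (hK1 c)
  have hlogint : ∀ c, Integrable (fun x => Real.log (h c x)) ν := by
    intro c
    refine (hint c).mono
      ((Real.measurable_log.comp (hhcont c).measurable).aestronglyMeasurable)
      (Filter.Eventually.of_forall fun x => ?_)
    rw [Real.norm_eq_abs, Real.norm_eq_abs,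
      abs_of_nonneg (Real.log_nonneg (hh1 c x)), abs_of_nonneg (hhpos c x).le]
    have := Real.log_le_sub_one_of_pos (hhpos c x)
    linarith
  have hjensen : ∀ c, ∫ x, Real.log (h c x) ∂ν ≤ Real.log (K c) := by
    intro c
    have hpt : ∀ x, Real.log (h c x) ≤ h c x / K c - 1 + Real.log (K c) := by
      intro x
      have h2 : Real.log (h c x / K c) ≤ h c x / K c - 1 :=
        Real.log_le_sub_one_of_pos (div_pos (hhpos c x) (hKpos c))
      rw [Real.log_div (hhpos c x).ne' (hKpos c).ne'] at h2
      linarith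
    have hi1 : Integrable (fun x => h c x / K c) ν := (hint c).div_const _
    have hi2 : Integrable (fun x => h c x / K c - 1) ν := hi1.sub (integrable_const 1)
    have hInt2 : Integrable (fun x => h c x / K c - 1 + Real.log (K c)) ν :=
      hi2.add (integrable_const _)
    have hm := integral_mono (hlogint c) hInt2 hpt
    rw [integral_add hi2 (integrable_const _), integral_sub hi1 (integrable_const 1),
      integral_div, hintval c] at hm
    simp only [integral_const, measure_univ, ENNReal.toReal_one, probReal_univ, smul_eq_mul, one_mul] at hm
    rw [div_self (hKpos c).ne'] at hm
    linarith
  have hFint : Integrable F ν := by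
    rw [hF]; exact integrable_finset_sum _ fun c _ => hlogint c
  have hFle : ∫ x, F x ∂ν ≤ ∑ c, Real.log (K c) := by
    rw [hF, integral_finset_sum _ fun c _ => hlogint c]
    exact Finset.sum_le_sum fun c _ => hjensen c
  have hI : ∫⁻ x, ENNReal.ofReal (F x) ∂ν = ENNReal.ofReal (∫ x, F x ∂ν) :=
    (ofReal_integral_eq_lintegral_ofReal hFint
      (Filter.Eventually.of_forall hFnn)).symm
  -- final RHS identification
  have hSpos : ∀ c, (0:ℝ) < ∑ c', rexp (g z₀ c' + lam / 2 * quadForm Sig (w c' - w c)) :=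
    fun c => Finset.sum_pos (fun _ _ => exp_pos _) hCne
  have hRHS : (-2 : ℝ) * ∑ c, Real.log (rexp (g z₀ c) /
        ∑ c', rexp (g z₀ c' + lam / 2 * quadForm Sig (w c' - w c)))
      = 2 * ∑ c, Real.log (K c) := by
    have hterm : ∀ c, Real.log (rexp (g z₀ c) /
        ∑ c', rexp (g z₀ c' + lam / 2 * quadForm Sig (w c' - w c))) = -Real.log (K c) := by
      intro c
      rw [Real.log_div (exp_pos _).ne' (hSpos c).ne', Real.log_exp]
      have hKeq : K c = (∑ c', rexp (g z₀ c' + lam / 2 * quadForm Sig (w c' - w c)))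
          / rexp (g z₀ c) := by
        rw [hK, Finset.sum_div]
        refine Finset.sum_congr rfl fun c' _ => ?_
        rw [← Real.exp_sub]
        congr 1
        ring
      rw [hKeq, Real.log_div (hSpos c).ne' (exp_pos _).ne', Real.log_exp]
      ring
    rw [Finset.sum_congr rfl fun c _ => hterm c, Finset.sum_neg_distrib]
    ring
  -- main calc
  calc ∫⁻ y, ∫⁻ x, ENNReal.ofReal (-Real.log (∑ c, p x c * p y c)) ∂ν ∂ν
      ≤ ∫⁻ y, ∫⁻ x, (ENNReal.ofReal (F x) + ENNReal.ofReal (F y)) ∂ν ∂ν := by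
        refine lintegral_mono fun y => lintegral_mono fun x =>
          le_trans (ENNReal.ofReal_le_ofReal (hbound x y)) ENNReal.ofReal_add_le
    _ = ∫⁻ y, ((∫⁻ x, ENNReal.ofReal (F x) ∂ν) + ENNReal.ofReal (F y)) ∂ν := by
        refine lintegral_congr fun y => ?_
        rw [lintegral_add_right _ measurable_const, lintegral_const]
        simp [measure_univ]
    _ = (∫⁻ x, ENNReal.ofReal (F x) ∂ν) + ∫⁻ y, ENNReal.ofReal (F y) ∂ν := by
        have hmeas2 : Measurable fun y : EuclideanSpace ℝ (Fin d) => ENNReal.ofReal (F y) :=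
          ENNReal.measurable_ofReal.comp hFmeas
        rw [lintegral_add_right _ hmeas2, lintegral_const]
        simp [measure_univ]
    _ = 2 * ∫⁻ x, ENNReal.ofReal (F x) ∂ν := (two_mul _).symm
    _ ≤ 2 * ENNReal.ofReal (∑ c, Real.log (K c)) := by
        rw [hI]
        exact mul_le_mul_right (ENNReal.ofReal_le_ofReal hFle) _
    _ = ENNReal.ofReal (2 * ∑ c, Real.log (K c)) := by
        rw [ENNReal.ofReal_mul (by norm_num : (0:ℝ) ≤ 2), ENNReal.ofReal_ofNat]
    _ = ENNReal.ofReal (-2 * ∑ c, Real.log (Real.exp (g z₀ c) /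
          ∑ c', Real.exp (g z₀ c' + lam / 2 * quadForm Sig (w c' - w c)))) := by
        rw [hRHS]
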